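/- arXiv:2101.08383 — 2 statements merged into one kernel-verified Lean document; each statement's English description precedes it below -/
import Mathlib

section
/- With the setup of the H-join and its associated matrix W̃: a vector v whose i-th block is v_i = W_{G_i} α_i is an eigenvector of A(G) with eigenvalue ρ if and only if (α_1,…,α_p) is an eigenvector of W̃ with eigenvalue ρ. -/
open Matrix

/-- The `H`-join of the family of graphs `G i`. -/
def SimpleGraph.hJoin {p : ℕ} (H : SimpleGraph (Fin p)) (n : Fin p → ℕ)
    (G : ∀ i, SimpleGraph (Fin (n i))) : SimpleGraph ((i : Fin p) × Fin (n i)) where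
  Adj x y := if h : x.1 = y.1 then (G x.1).Adj x.2 (Fin.cast (congrArg n h.symm) y.2)
             else H.Adj x.1 y.1
  symm := by
    constructor
    rintro ⟨i, a⟩ ⟨k, b⟩ hadj
    dsimp at *
    by_cases h : i = k
    · subst h
      rw [dif_pos rfl] at hadj ⊢
      simpa using ((G i).adj_symm (by simpa using hadj))
    · rw [dif_neg h] at hadj
      rw [dif_neg (Ne.symm h)]
      exact H.adj_symm hadj
  loopless := by
    constructor
    rintro ⟨i, a⟩ h
    rw [dif_pos rfl] at h
    simp at h

noncomputable instance {p : ℕ} (H : SimpleGraph (Fin p)) (n : Fin p → ℕ)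
    (G : ∀ i, SimpleGraph (Fin (n i))) : DecidableRel (H.hJoin n G).Adj :=
  Classical.decRel _

/-- `μ` is a main eigenvalue of the matrix `A`. -/
def Matrix.IsMainEig {m : ℕ} (A : Matrix (Fin m) (Fin m) ℝ) (μ : ℝ) : Prop :=
  ∃ v : Fin m → ℝ, A *ᵥ v = μ • v ∧ v ⬝ᵥ (fun _ => (1 : ℝ)) ≠ 0

open Polynomial in
lemma hjaux_pow_mulVec_eig {m : ℕ} (A : Matrix (Fin m) (Fin m) ℝ) {μ : ℝ} {w : Fin m → ℝ}
    (h : A *ᵥ w = μ • w) (k : ℕ) : (A ^ k) *ᵥ w = μ ^ k • w := by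
  induction k with
  | zero => simp
  | succ k ih =>
    rw [pow_succ, pow_succ, ← mulVec_mulVec, h, mulVec_smul, ih, smul_smul, mul_comm]

open Polynomial in
lemma hjaux_aeval_mulVec_eig {m : ℕ} (A : Matrix (Fin m) (Fin m) ℝ) {μ : ℝ} {w : Fin m → ℝ}
    (h : A *ᵥ w = μ • w) (q : ℝ[X]) : (aeval A q) *ᵥ w = q.eval μ • w := by
  induction q using Polynomial.induction_on' with
  | add p q hp hq => rw [map_add, add_mulVec, hp, hq, eval_add, add_smul]
  | monomial k a =>
    rw [aeval_monomial, eval_monomial, ← Algebra.smul_def, smul_mulVec,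
      hjaux_pow_mulVec_eig A h k, smul_smul]

open Polynomial in
lemma hjaux_main_poly_annihilates {m : ℕ} (A : Matrix (Fin m) (Fin m) ℝ) (hA : A.IsSymm)
    (S : Finset ℝ) (hS : ∀ μ, μ ∈ S ↔ A.IsMainEig μ) :
    (aeval A (∏ μ ∈ S, (X - C μ))) *ᵥ (fun _ => (1:ℝ)) = 0 := by
  have hH : A.IsHermitian := by
    rwa [Matrix.IsHermitian, conjTranspose_eq_transpose_of_trivial]
  set b := hH.eigenvectorBasis with hb
  have hrepr : ∀ o : EuclideanSpace ℝ (Fin m), ∑ i, b.repr o i • (b i : Fin m → ℝ) = o := by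
    intro o
    have := b.sum_repr o
    have := congrArg (fun x : EuclideanSpace ℝ (Fin m) => (x : Fin m → ℝ)) this
    simpa using this
  have h1 : (fun _ => (1:ℝ)) = ∑ i, b.repr (WithLp.toLp 2 (fun _ => (1:ℝ))) i • (b i : Fin m → ℝ) :=
    (hrepr (WithLp.toLp 2 (fun _ => (1:ℝ)))).symm
  rw [h1, ← mulVecLin_apply, map_sum]
  apply Finset.sum_eq_zero
  intro i _
  have hei : A *ᵥ (b i : Fin m → ℝ) = hH.eigenvalues i • (b i : Fin m → ℝ) :=
    hH.mulVec_eigenvectorBasis i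
  rw [mulVecLin_apply, mulVec_smul, hjaux_aeval_mulVec_eig A hei]
  by_cases hr : b.repr (WithLp.toLp 2 (fun _ => (1:ℝ))) i = 0
  · rw [hr, zero_smul]
  · have hmem : hH.eigenvalues i ∈ S := by
      rw [hS]
      refine ⟨(b i : Fin m → ℝ), hei, ?_⟩
      have : (b i : Fin m → ℝ) ⬝ᵥ (fun _ => (1:ℝ)) = b.repr (WithLp.toLp 2 (fun _ => (1:ℝ))) i := by
        rw [b.repr_apply_apply]
        simp [PiLp.inner_apply, dotProduct]
      rw [this]
      exact hr
    have : eval (hH.eigenvalues i) (∏ μ ∈ S, (X - C μ)) = 0 := by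
      rw [eval_prod]
      exact Finset.prod_eq_zero hmem (by simp)
    rw [this, zero_smul, smul_zero]

lemma hjaux_sum_mulVec {ι : Type*} (t : Finset ι) {a b : ℕ} (M : ι → Matrix (Fin a) (Fin b) ℝ)
    (w : Fin b → ℝ) : (∑ k ∈ t, M k) *ᵥ w = ∑ k ∈ t, M k *ᵥ w := by
  induction t using Finset.cons_induction with
  | empty => simp
  | cons x t hx ih => rw [Finset.sum_cons, add_mulVec, ih, Finset.sum_cons]

lemma hjaux_sum_mul_ite {sz : ℕ} (t : ℕ) (ht : t < sz) (f : Fin sz → ℝ) (g : ℝ) :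
    ∑ k : Fin sz, f k * (if (k : ℕ) = t then g else 0) = f ⟨t, ht⟩ * g := by
  rw [Finset.sum_eq_single (⟨t, ht⟩ : Fin sz)]
  · simp
  · intro k _ hk
    rw [if_neg, mul_zero]
    simpa [Fin.ext_iff] using hk
  · intro h
    exact absurd (Finset.mem_univ _) h

lemma hjaux_sum_mul_sum_swap {A B : Type*} (sA : Finset A) (sB : Finset B)
    (F : A → ℝ) (G : A → B → ℝ) (h : B → ℝ) :
    ∑ x ∈ sA, F x * ∑ y ∈ sB, G x y * h y = ∑ y ∈ sB, (∑ x ∈ sA, F x * G x y) * h y := by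
  simp_rw [Finset.mul_sum, Finset.sum_mul]
  rw [Finset.sum_comm]
  simp_rw [mul_assoc]

open Polynomial in
/-- A vector `v` whose `i`-th block is `v_i = W_{G_i} α_i` is an eigenvector of the
adjacency matrix of the `H`-join for the eigenvalue `ρ` iff `(α_1, …, α_p)` is an
eigenvector of the associated matrix `W̃` for `ρ`. -/
theorem hJoin_assocMatrix_eigenvector_iff {p : ℕ} (H : SimpleGraph (Fin p))
    [DecidableRel H.Adj] (n : Fin p → ℕ) (G : ∀ i, SimpleGraph (Fin (n i)))
    [∀ i, DecidableRel (G i).Adj]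
    -- `s i` is the number of distinct main eigenvalues of `G i`
    (s : Fin p → ℕ) (hs : ∀ i, s i = {μ : ℝ | ((G i).adjMatrix ℝ).IsMainEig μ}.ncard)
    -- `Wmat i` is the walk matrix of `G i`, of full column rank
    (Wmat : ∀ i, Matrix (Fin (n i)) (Fin (s i)) ℝ)
    (hWmat : ∀ i a k, Wmat i a k = (((G i).adjMatrix ℝ ^ (k : ℕ)) *ᵥ fun _ => (1 : ℝ)) a)
    (hrank : ∀ i, (Wmat i).rank = s i)
    -- `c i` lists the coefficients of the main characteristic polynomial of `G i`
    (S : Fin p → Finset ℝ) (hS : ∀ i μ, μ ∈ S i ↔ ((G i).adjMatrix ℝ).IsMainEig μ)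
    (c : ∀ i, Fin (s i) → ℝ)
    (hc : ∀ i, ∏ μ ∈ S i, (X - C μ) =
      X ^ (s i) - ∑ k : Fin (s i), C (c i k) * X ^ (k : ℕ))
    -- `Wt` is the `H`-join associated matrix `W̃`
    (Wt : Matrix ((i : Fin p) × Fin (s i)) ((i : Fin p) × Fin (s i)) ℝ)
    (hWt : ∀ x y, Wt x y =
      if x.1 = y.1 then
        -- companion matrix `C(m_{G_{x.1}})`
        (if (y.2 : ℕ) = s x.1 - 1 then c x.1 x.2
         else if (x.2 : ℕ) = (y.2 : ℕ) + 1 then 1 else 0)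
      else if H.Adj x.1 y.1 then
        -- `M_{x.1, y.1}`: first row `jᵀ W_{G_{y.1}}`, zeros elsewhere
        (if (x.2 : ℕ) = 0 then ∑ a, Wmat y.1 a y.2 else 0)
      else 0) :
    ∀ (ρ : ℝ) (α : ((i : Fin p) × Fin (s i)) → ℝ)
      (v : ((i : Fin p) × Fin (n i)) → ℝ)
      (hv : v = fun x => ∑ k : Fin (s x.1), Wmat x.1 x.2 k * α ⟨x.1, k⟩),
      (v ≠ 0 ∧ (H.hJoin n G).adjMatrix ℝ *ᵥ v = ρ • v) ↔
        (α ≠ 0 ∧ Wt *ᵥ α = ρ • α) := by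
  intro ρ α v hv
  classical
  -- injectivity of the walk matrices
  have hinj : ∀ (i : Fin p) (β : Fin (s i) → ℝ), Wmat i *ᵥ β = 0 → β = 0 := by
    intro i β hβ
    have hk := LinearMap.finrank_range_add_finrank_ker (Wmat i).mulVecLin
    have hr : Module.finrank ℝ (LinearMap.range (Wmat i).mulVecLin) = s i := hrank i
    rw [hr, Module.finrank_fin_fun] at hk
    have hker : LinearMap.ker (Wmat i).mulVecLin = ⊥ :=
      Submodule.finrank_eq_zero.mp (by omega)
    have hmem : β ∈ LinearMap.ker (Wmat i).mulVecLin := by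
      simpa [LinearMap.mem_ker, mulVecLin_apply] using hβ
    rw [hker] at hmem
    simpa using hmem
  -- the main polynomial annihilates the all-ones vector
  have hann : ∀ i, (aeval ((G i).adjMatrix ℝ) (∏ μ ∈ S i, (X - C μ)))
      *ᵥ (fun _ => (1:ℝ)) = 0 :=
    fun i => hjaux_main_poly_annihilates _ ((G i).isSymm_adjMatrix) (S i) (hS i)
  -- blocks with vertices have at least one main eigenvalue
  have hspos : ∀ i, Fin (n i) → 0 < s i := by
    intro i a
    by_contra hneg
    have h0 : s i = 0 := by omega
    have h := hann i
    rw [hc i] at h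
    haveI : IsEmpty (Fin (s i)) := ⟨fun k => absurd k.2 (by omega)⟩
    rw [Finset.univ_eq_empty, Finset.sum_empty, sub_zero, h0, pow_zero, _root_.map_one,
      one_mulVec] at h
    simpa using congrFun h a
  -- `A ^ s i` applied to the ones vector
  have hpow : ∀ i, ((G i).adjMatrix ℝ ^ (s i)) *ᵥ (fun _ => (1:ℝ)) =
      ∑ k : Fin (s i), c i k • (((G i).adjMatrix ℝ ^ (k:ℕ)) *ᵥ fun _ => (1:ℝ)) := by
    intro i
    have h := hann i
    rw [hc i] at h
    simp only [map_sub, map_sum, _root_.map_mul, map_pow, aeval_X, aeval_C] at h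
    rw [sub_mulVec, sub_eq_zero] at h
    rw [h, hjaux_sum_mulVec]
    refine Finset.sum_congr rfl fun k _ => ?_
    rw [← Algebra.smul_def, smul_mulVec]
  have hcol : ∀ i (m : Fin (s i)), (fun b => Wmat i b m)
      = (((G i).adjMatrix ℝ ^ (m:ℕ)) *ᵥ fun _ => (1:ℝ)) :=
    fun i m => funext fun b => hWmat i b m
  -- the key pointwise identity
  have key : ∀ (i : Fin p) (a : Fin (n i)),
      (((H.hJoin n G).adjMatrix ℝ) *ᵥ v) ⟨i, a⟩
        = ∑ k : Fin (s i), Wmat i a k * (Wt *ᵥ α) ⟨i, k⟩ := by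
    intro i a
    have hsi : 0 < s i := hspos i a
    have hAdj_diag : ∀ (b : Fin (n i)), (H.hJoin n G).Adj ⟨i,a⟩ ⟨i,b⟩ ↔ (G i).Adj a b := by
      intro b
      show (if h : i = i then (G i).Adj a (Fin.cast (congrArg n h.symm) b)
            else H.Adj i i) ↔ _
      rw [dif_pos rfl]
      have : Fin.cast (congrArg n (rfl : (i : Fin p) = i).symm) b = b :=
        Fin.ext (by simp)
      rw [this]
    have hAdj_off : ∀ (j : Fin p), j ≠ i → ∀ (b : Fin (n j)),
        (H.hJoin n G).Adj ⟨i,a⟩ ⟨j,b⟩ ↔ H.Adj i j := by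
      intro j hj b
      show (if h : i = j then (G i).Adj a (Fin.cast (congrArg n h.symm) b)
            else H.Adj i j) ↔ _
      rw [dif_neg (fun h => hj h.symm)]
    set D : ℝ := ∑ m : Fin (s i),
      (((G i).adjMatrix ℝ ^ ((m:ℕ)+1)) *ᵥ fun _ => (1:ℝ)) a * α ⟨i, m⟩ with hD
    set O : Fin p → ℝ := fun j =>
      if H.Adj i j then ∑ m : Fin (s j), (∑ b, Wmat j b m) * α ⟨j, m⟩ else 0 with hO
    have hL : (((H.hJoin n G).adjMatrix ℝ) *ᵥ v) ⟨i, a⟩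
        = D + ∑ j ∈ Finset.univ.erase i, O j := by
      have h1 : (((H.hJoin n G).adjMatrix ℝ) *ᵥ v) ⟨i, a⟩
          = ∑ y : (j : Fin p) × Fin (n j),
              ((H.hJoin n G).adjMatrix ℝ) ⟨i,a⟩ y * v y := by
        simp [mulVec, dotProduct]
      rw [h1, ← Finset.univ_sigma_univ, Finset.sum_sigma,
        ← Finset.add_sum_erase _ _ (Finset.mem_univ i)]
      congr 1
      · -- diagonal block
        have e1 : ∀ b : Fin (n i),
            ((H.hJoin n G).adjMatrix ℝ) ⟨i,a⟩ ⟨i,b⟩ * v ⟨i,b⟩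
              = (G i).adjMatrix ℝ a b * ∑ m : Fin (s i), Wmat i b m * α ⟨i,m⟩ := by
          intro b
          rw [hv]
          congr 1
          simp only [SimpleGraph.adjMatrix_apply]
          simp [hAdj_diag b]
        rw [Finset.sum_congr rfl (fun b _ => e1 b),
          hjaux_sum_mul_sum_swap Finset.univ Finset.univ
            (fun b => (G i).adjMatrix ℝ a b) (fun b m => Wmat i b m)
            (fun m => α ⟨i,m⟩), hD]
        refine Finset.sum_congr rfl fun m _ => ?_
        congr 1
        have e2 : ∑ b, (G i).adjMatrix ℝ a b * Wmat i b m
            = ((G i).adjMatrix ℝ *ᵥ fun b => Wmat i b m) a := by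
          simp [mulVec, dotProduct]
        rw [e2, hcol i m, mulVec_mulVec, ← pow_succ']
      · refine Finset.sum_congr rfl fun j hj => ?_
        have hji : j ≠ i := Finset.ne_of_mem_erase hj
        rw [hO]
        by_cases hadj : H.Adj i j
        · simp only [if_pos hadj]
          have e1 : ∀ b : Fin (n j),
              ((H.hJoin n G).adjMatrix ℝ) ⟨i,a⟩ ⟨j,b⟩ * v ⟨j,b⟩
                = 1 * ∑ m : Fin (s j), Wmat j b m * α ⟨j,m⟩ := by
            intro b
            rw [hv]
            congr 1
            simp only [SimpleGraph.adjMatrix_apply]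
            simp [hAdj_off j hji b, hadj]
          rw [Finset.sum_congr rfl (fun b _ => e1 b),
            hjaux_sum_mul_sum_swap Finset.univ Finset.univ
              (fun _ : Fin (n j) => (1:ℝ)) (fun b m => Wmat j b m)
              (fun m => α ⟨j,m⟩)]
          refine Finset.sum_congr rfl fun m _ => ?_
          congr 1
          simp
        · simp only [if_neg hadj]
          refine Finset.sum_eq_zero fun b _ => ?_
          simp only [SimpleGraph.adjMatrix_apply]
          simp [hAdj_off j hji b, hadj]
    have hR : ∑ k : Fin (s i), Wmat i a k * (Wt *ᵥ α) ⟨i, k⟩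
        = D + ∑ j ∈ Finset.univ.erase i, O j := by
      have hWt' : ∀ k : Fin (s i), (Wt *ᵥ α) ⟨i,k⟩
          = (∑ m : Fin (s i),
              (if (m:ℕ) = s i - 1 then c i k
               else if (k:ℕ) = (m:ℕ)+1 then (1:ℝ) else 0) * α ⟨i,m⟩)
            + ∑ j ∈ Finset.univ.erase i,
                (if H.Adj i j then
                  (if (k:ℕ) = 0 then ∑ m : Fin (s j), (∑ b, Wmat j b m) * α ⟨j,m⟩ else 0)
                 else 0) := by
        intro k
        have h1 : (Wt *ᵥ α) ⟨i,k⟩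
            = ∑ y : (j : Fin p) × Fin (s j), Wt ⟨i,k⟩ y * α y := by
          simp [mulVec, dotProduct]
        rw [h1, ← Finset.univ_sigma_univ, Finset.sum_sigma,
          ← Finset.add_sum_erase _ _ (Finset.mem_univ i)]
        congr 1
        · refine Finset.sum_congr rfl fun m _ => ?_
          rw [hWt]
          simp
        · refine Finset.sum_congr rfl fun j hj => ?_
          have hji : j ≠ i := Finset.ne_of_mem_erase hj
          have hij : ¬ (i = j) := fun h => hji h.symm
          by_cases hadj : H.Adj i j
          · simp only [if_pos hadj]
            by_cases hk : (k:ℕ) = 0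
            · simp only [if_pos hk]
              refine Finset.sum_congr rfl fun m _ => ?_
              rw [hWt]
              simp [hij, hadj, hk]
            · simp only [if_neg hk]
              refine Finset.sum_eq_zero fun m _ => ?_
              rw [hWt]
              simp [hij, hadj, hk]
          · simp only [if_neg hadj]
            refine Finset.sum_eq_zero fun m _ => ?_
            rw [hWt]
            simp [hij, hadj]
      simp only [hWt']
      simp only [mul_add, Finset.sum_add_distrib]
      congr 1
      · -- companion part gives D
        rw [hjaux_sum_mul_sum_swap Finset.univ Finset.univ
          (fun k => Wmat i a k)
          (fun (k m : Fin (s i)) => (if (m:ℕ) = s i - 1 then c i k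
            else if (k:ℕ) = (m:ℕ)+1 then (1:ℝ) else 0))
          (fun m : Fin (s i) => α ⟨i,m⟩), hD]
        refine Finset.sum_congr rfl fun m _ => ?_
        congr 1
        have hmlt : (m:ℕ) < s i := m.2
        by_cases hm : (m:ℕ) = s i - 1
        · simp only [if_pos hm]
          have hpa := congrFun (hpow i) a
          simp only [Finset.sum_apply, Pi.smul_apply, smul_eq_mul] at hpa
          have : ∑ k : Fin (s i), Wmat i a k * c i k
              = ∑ k : Fin (s i), c i k * (((G i).adjMatrix ℝ ^ (k:ℕ)) *ᵥ fun _ => (1:ℝ)) a := by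
            refine Finset.sum_congr rfl fun k _ => ?_
            rw [hWmat i a k, mul_comm]
          rw [this, ← hpa, show (m:ℕ)+1 = s i from by omega]
        · simp only [if_neg hm]
          have hlt : (m:ℕ)+1 < s i := by omega
          rw [hjaux_sum_mul_ite ((m:ℕ)+1) hlt (fun k => Wmat i a k) 1, mul_one,
            hWmat i a ⟨(m:ℕ)+1, hlt⟩]
      · -- cross part gives the `O` sum
        simp_rw [Finset.mul_sum]
        rw [Finset.sum_comm]
        refine Finset.sum_congr rfl fun j hj => ?_
        rw [hO]
        by_cases hadj : H.Adj i j
        · simp only [if_pos hadj]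
          rw [hjaux_sum_mul_ite 0 hsi (fun k => Wmat i a k) _, hWmat i a ⟨0, hsi⟩]
          simp
        · simp only [if_neg hadj, mul_zero]
          exact Finset.sum_const_zero
    rw [hL, hR]
  -- now the equivalence
  constructor
  · rintro ⟨hv0, heig⟩
    have hWtα : Wt *ᵥ α = ρ • α := by
      funext x
      obtain ⟨i, k⟩ := x
      have hβ : Wmat i *ᵥ (fun k => (Wt *ᵥ α) ⟨i,k⟩ - ρ * α ⟨i,k⟩) = 0 := by
        funext a
        have h2 : (((H.hJoin n G).adjMatrix ℝ) *ᵥ v) ⟨i,a⟩ = ρ * v ⟨i,a⟩ := by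
          rw [heig]; rfl
        have e1 : (Wmat i *ᵥ fun k => (Wt *ᵥ α) ⟨i,k⟩ - ρ * α ⟨i,k⟩) a
            = (∑ k : Fin (s i), Wmat i a k * (Wt *ᵥ α) ⟨i,k⟩)
              - ρ * ∑ k : Fin (s i), Wmat i a k * α ⟨i,k⟩ := by
          simp [mulVec, dotProduct, mul_sub, Finset.sum_sub_distrib, Finset.mul_sum,
            mul_left_comm]
        have e2 : v ⟨i,a⟩ = ∑ k : Fin (s i), Wmat i a k * α ⟨i,k⟩ := by rw [hv]
        rw [e1, ← key i a, h2, e2]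
        simp
      have hz := congrFun (hinj i _ hβ) k
      simp only [Pi.zero_apply, sub_eq_zero] at hz
      simpa using hz
    refine ⟨?_, hWtα⟩
    intro hα0
    apply hv0
    rw [hv, hα0]
    funext x
    simp
  · rintro ⟨hα0, hWtα⟩
    constructor
    · intro hveq
      apply hα0
      funext x
      obtain ⟨i, k⟩ := x
      have hβ : Wmat i *ᵥ (fun k => α ⟨i,k⟩) = 0 := by
        funext a
        have h0 : v ⟨i,a⟩ = 0 := by rw [hveq]; rfl
        rw [hv] at h0
        simpa [mulVec, dotProduct] using h0
      simpa using congrFun (hinj i _ hβ) k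
    · funext x
      obtain ⟨i, a⟩ := x
      have h1 := key i a
      rw [hWtα] at h1
      rw [h1]
      have h2 : (ρ • v) ⟨i,a⟩ = ρ * v ⟨i,a⟩ := rfl
      rw [h2, hv]
      simp only [Finset.mul_sum]
      refine Finset.sum_congr rfl fun k _ => ?_
      simp only [Pi.smul_apply, smul_eq_mul]
      ring
end

section
/- Let G be the H-join of graphs G_1,…,G_p, each G_i having order n_i, s_i distinct main eigenvalues, and t_i distinct eigenvalues overall. Then the spectrum of G (as a multiset of Σ n_i real eigenvalues) is the union of: for each i, each main eigenvalue μ of G_i with multiplicity m(μ) − 1; for each i, each non-main eigenvalue μ of G_i with its full multiplicity m(μ); and the s = Σ s_i eigenvalues of the H-join associated matrix W̃. -/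
open Matrix

/-! ### Auxiliary general lemmas -/

section Aux
open Polynomial RealInnerProductSpace

set_option linter.unusedSectionVars false

variable {m κ ρ : Type*} [Fintype m] [DecidableEq m] [Fintype κ] [DecidableEq κ]
  [Fintype ρ] [DecidableEq ρ] {R : Type*} [CommRing R] [IsDomain R]

open Polynomial in
lemma my_charpoly_conj (A B T : Matrix m m R) (hB : IsUnit B.det)
    (h : A * B = B * T) : A.charpoly = T.charpoly := by
  have key : charmatrix A * (C : R →+* R[X]).mapMatrix B
      = (C : R →+* R[X]).mapMatrix B * charmatrix T := by
    unfold charmatrix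
    rw [sub_mul, mul_sub]
    congr 1
    · ext i j
      rw [scalar_apply, diagonal_mul, mul_diagonal, mul_comm]
    · simp only [RingHom.mapMatrix_apply, ← Matrix.map_mul, h]
  have hdet := congrArg Matrix.det key
  rw [det_mul, det_mul, ← RingHom.map_det, mul_comm A.charmatrix.det] at hdet
  exact mul_left_cancel₀ (hB.map (C : R →+* R[X])).ne_zero hdet

open Polynomial in
lemma my_charpoly_diagonal (d : m → R) :
    (diagonal d).charpoly = ∏ i, (X - C (d i)) := by
  have h : charmatrix (diagonal d) = diagonal fun i => X - C (d i) := by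
    ext i j
    by_cases h : i = j
    · subst h; simp [charmatrix_apply_eq]
    · simp [charmatrix_apply_ne _ _ _ h, diagonal_apply_ne _ h]
  rw [Matrix.charpoly, h, det_diagonal]

/-- matrix with columns the columns of `W` followed by the vectors `f`. -/
def Bcols {m' κ' ρ' R' : Type*} [CommRing R'] (W : Matrix m' κ' R') (f : ρ' → m' → R') :
    Matrix m' (κ' ⊕ ρ') R' :=
  Matrix.of fun a b => Sum.elim (fun x => W a x) (fun k => f k a) b

lemma Bcols_mulVec {m' κ' ρ' R' : Type*} [CommRing R'] [Fintype κ'] [Fintype ρ']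
    (W : Matrix m' κ' R') (f : ρ' → m' → R') (u : κ' ⊕ ρ' → R') :
    (Bcols W f) *ᵥ u = W *ᵥ (u ∘ Sum.inl) + ∑ k, u (Sum.inr k) • f k := by
  ext a
  simp only [mulVec, dotProduct, Fintype.sum_sum_type, Bcols, Matrix.of_apply]
  simp [Pi.add_apply, Finset.sum_apply, mulVec, dotProduct, mul_comm]

open Polynomial in
lemma my_key_factor (A : Matrix m m R) (W : Matrix m κ R) (Cm : Matrix κ κ R)
    (f : ρ → m → R) (ν : ρ → R) (e : m ≃ κ ⊕ ρ)
    (hAW : A * W = W * Cm) (hf : ∀ r, A *ᵥ f r = ν r • f r)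
    (hdet : IsUnit ((Bcols W f).submatrix id e).det) :
    A.charpoly = Cm.charpoly * ∏ r, (X - C (ν r)) := by
  set T0 : Matrix (κ ⊕ ρ) (κ ⊕ ρ) R := fromBlocks Cm 0 0 (diagonal ν) with hT0
  have hcore : A * Bcols W f = (Bcols W f) * T0 := by
    ext a b
    cases b with
    | inl x =>
      have h1 : (A * Bcols W f) a (Sum.inl x) = (A * W) a x := by
        simp [mul_apply, Bcols]
      rw [h1, hAW]
      simp [mul_apply, Bcols, hT0, Fintype.sum_sum_type, fromBlocks]
    | inr r =>
      have h1 : (A * Bcols W f) a (Sum.inr r) = (A *ᵥ f r) a := by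
        simp [mul_apply, Bcols, mulVec, dotProduct]
      rw [h1, hf r]
      simp [mul_apply, Bcols, hT0, Fintype.sum_sum_type, fromBlocks,
        diagonal_apply, Finset.sum_ite_eq', mul_comm]
  have hmul : A * ((Bcols W f).submatrix id e)
      = ((Bcols W f).submatrix id e) * (T0.submatrix e e) := by
    ext a b
    have l1 : (A * ((Bcols W f).submatrix id e)) a b = (A * Bcols W f) a (e b) := by
      simp [mul_apply, submatrix_apply]
    have l2 : (((Bcols W f).submatrix id e) * (T0.submatrix e e)) a b
        = ((Bcols W f) * T0) a (e b) := by
      simp only [mul_apply, submatrix_apply, id_eq]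
      exact Fintype.sum_equiv e (fun c => Bcols W f a (e c) * T0 (e c) (e b))
        (fun d => Bcols W f a d * T0 d (e b)) (fun c => rfl)
    rw [l1, l2, hcore]
  have h1 := my_charpoly_conj A _ _ hdet hmul
  have h2 : (T0.submatrix e e).charpoly = T0.charpoly := by
    have : T0.submatrix e e = reindex e.symm e.symm T0 := by
      simp [reindex_apply]
    rw [this, charpoly_reindex]
  rw [h1, h2, hT0, charpoly_fromBlocks_zero₂₁, my_charpoly_diagonal]

end Aux

/-! ### Spectral auxiliary lemmas -/

section Spec
open Polynomial RealInnerProductSpace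
variable {m s : ℕ}

lemma my_inner_dot {a : ℕ} (x y : EuclideanSpace ℝ (Fin a)) : ⟪x, y⟫ = (x : Fin a → ℝ) ⬝ᵥ y := by
  simp [PiLp.inner_apply, dotProduct, mul_comm]

lemma my_mulVec_sum {a b : ℕ} {α : Type*} [Fintype α] (M : Matrix (Fin a) (Fin b) ℝ)
    (w : α → (Fin b → ℝ)) : M *ᵥ (∑ k, w k) = ∑ k, M *ᵥ w k :=
  map_sum (M.mulVecLin) w Finset.univ

lemma my_sum_mulVec {a b : ℕ} {α : Type*} [Fintype α] (M : α → Matrix (Fin a) (Fin b) ℝ)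
    (w : Fin b → ℝ) : (∑ k, M k) *ᵥ w = ∑ k, M k *ᵥ w := by
  ext x
  simp only [mulVec, dotProduct, Matrix.sum_apply, Finset.sum_apply, Finset.sum_mul]
  rw [Finset.sum_comm]

lemma my_pow_mulVec (A : Matrix (Fin m) (Fin m) ℝ) {μ : ℝ} {v : Fin m → ℝ}
    (hv : A *ᵥ v = μ • v) : ∀ k : ℕ, (A ^ k) *ᵥ v = μ ^ k • v := by
  intro k
  induction k with
  | zero => simp
  | succ k ih =>
    rw [pow_succ, pow_succ, ← mulVec_mulVec, hv, mulVec_smul, ih, smul_smul, mul_comm]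

lemma my_aeval_mulVec (A : Matrix (Fin m) (Fin m) ℝ) (q : ℝ[X]) {μ : ℝ}
    {v : Fin m → ℝ} (hv : A *ᵥ v = μ • v) :
    (Polynomial.aeval A q) *ᵥ v = q.eval μ • v := by
  induction q using Polynomial.induction_on' with
  | add p q hp hq => rw [map_add, add_mulVec, hp, hq, eval_add, add_smul]
  | monomial k a =>
    rw [aeval_monomial, eval_monomial, ← mulVec_mulVec, my_pow_mulVec A hv k, mulVec_smul,
      Algebra.algebraMap_eq_smul_one, smul_mulVec, one_mulVec, smul_smul, mul_comm]

lemma my_repr_dot {a : ℕ} (bb : OrthonormalBasis (Fin a) ℝ (EuclideanSpace ℝ (Fin a)))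
    (x : EuclideanSpace ℝ (Fin a)) (k : Fin a) :
    bb.repr x k = (⇑(bb k) : Fin a → ℝ) ⬝ᵥ x := by
  rw [OrthonormalBasis.repr_apply_apply]
  exact my_inner_dot (bb k) x

lemma my_eigen_main (A : Matrix (Fin m) (Fin m) ℝ) (hA : A.IsHermitian) (k : Fin m)
    (hk : (⇑(hA.eigenvectorBasis k) : Fin m → ℝ) ⬝ᵥ (fun _ => (1:ℝ)) ≠ 0) :
    A.IsMainEig (hA.eigenvalues k) :=
  ⟨_, hA.mulVec_eigenvectorBasis k, hk⟩

lemma my_annihilate (A : Matrix (Fin m) (Fin m) ℝ) (hA : A.IsHermitian)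
    (S : Finset ℝ) (hS : ∀ μ, A.IsMainEig μ → μ ∈ S) :
    (Polynomial.aeval A (∏ μ ∈ S, (X - C μ))) *ᵥ (fun _ => (1:ℝ)) = 0 := by
  classical
  set q : ℝ[X] := ∏ μ ∈ S, (X - C μ) with hq
  let b := hA.eigenvectorBasis
  let ones : EuclideanSpace ℝ (Fin m) := WithLp.toLp 2 (fun _ => (1:ℝ))
  have hdec : (fun _ => (1:ℝ)) = ∑ k, (b.repr ones k) • (⇑(b k) : Fin m → ℝ) := by
    have h := congrArg WithLp.ofLp (b.sum_repr ones)
    simp only [WithLp.ofLp_sum, WithLp.ofLp_smul] at h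
    exact h.symm
  rw [hdec, my_mulVec_sum]
  refine Finset.sum_eq_zero fun k _ => ?_
  rw [mulVec_smul, my_aeval_mulVec A q (hA.mulVec_eigenvectorBasis k)]
  by_cases hc : b.repr ones k = 0
  · rw [hc, zero_smul]
  · rw [my_repr_dot b ones k] at hc
    have hmain : A.IsMainEig (hA.eigenvalues k) := my_eigen_main A hA k hc
    have hmem := hS _ hmain
    have heval : q.eval (hA.eigenvalues k) = 0 := by
      rw [hq, eval_prod]
      exact Finset.prod_eq_zero hmem (by simp)
    rw [heval, zero_smul, smul_zero]

lemma my_exists_main (hm : 0 < m) (A : Matrix (Fin m) (Fin m) ℝ) (hA : A.IsHermitian) :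
    ∃ μ, A.IsMainEig μ := by
  by_contra h
  push_neg at h
  let b := hA.eigenvectorBasis
  let ones : EuclideanSpace ℝ (Fin m) := WithLp.toLp 2 (fun _ => (1:ℝ))
  have hz : ∀ k, b.repr ones k = 0 := by
    intro k
    by_contra hc
    rw [my_repr_dot b ones k] at hc
    exact h _ (my_eigen_main A hA k hc)
  have hde : (fun _ => (1:ℝ)) = ∑ k, (b.repr ones k) • (⇑(b k) : Fin m → ℝ) := by
    have h := congrArg WithLp.ofLp (b.sum_repr ones)
    simp only [WithLp.ofLp_sum, WithLp.ofLp_smul] at h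
    exact h.symm
  have h0 : (fun _ => (1:ℝ)) = (0 : Fin m → ℝ) := by
    rw [hde]
    exact Finset.sum_eq_zero fun k _ => by rw [hz k, zero_smul]
  exact one_ne_zero (congrFun h0 ⟨0, hm⟩ : (1:ℝ) = 0)

lemma my_roots_eq (Cm : Matrix (Fin s) (Fin s) ℝ) (S : Finset ℝ) (hcard : S.card = s)
    (hroot : ∀ μ ∈ S, ∃ x : Fin s → ℝ, x ≠ 0 ∧ Cm *ᵥ x = μ • x) :
    Cm.charpoly.roots = S.val := by
  classical
  have hne : Cm.charpoly ≠ 0 := Cm.charpoly_monic.ne_zero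
  have hdeg : Cm.charpoly.natDegree = s := by
    have := Matrix.charpoly_natDegree_eq_dim Cm
    rwa [Fintype.card_fin] at this
  have hsub : S.val ≤ Cm.charpoly.roots := by
    rw [Multiset.le_iff_count]
    intro a
    by_cases ha : a ∈ S
    · rw [Multiset.count_eq_one_of_mem S.nodup ha]
      refine Multiset.one_le_count_iff_mem.mpr ?_
      rw [Polynomial.mem_roots hne]
      obtain ⟨x, hx0, hx⟩ := hroot a ha
      have hmap : (charmatrix Cm).map (eval a) = a • (1 : Matrix (Fin s) (Fin s) ℝ) - Cm := by
        ext i j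
        by_cases h : i = j
        · subst h; simp [charmatrix_apply_eq]
        · simp [charmatrix_apply_ne _ _ _ h, Matrix.one_apply_ne h]
      have hdet0 : (a • (1 : Matrix (Fin s) (Fin s) ℝ) - Cm).det = 0 := by
        by_contra hd
        refine hx0 (Matrix.eq_zero_of_mulVec_eq_zero hd ?_)
        rw [sub_mulVec, smul_mulVec, one_mulVec, hx, sub_self]
      show Cm.charpoly.IsRoot a
      show Cm.charpoly.eval a = 0
      rw [Matrix.charpoly, ← Polynomial.coe_evalRingHom, RingHom.map_det,
        RingHom.mapMatrix_apply, Polynomial.coe_evalRingHom, hmap, hdet0]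
    · rw [Multiset.count_eq_zero_of_notMem (by simpa using ha)]
      exact Nat.zero_le _
  have hcards : Multiset.card Cm.charpoly.roots ≤ Multiset.card S.val := by
    have h1 := Cm.charpoly.card_roots'
    rw [hdeg] at h1
    have h2 : Multiset.card S.val = s := by rw [← hcard]; rfl
    omega
  exact (Multiset.eq_of_le_of_card_le hsub hcards).symm

end Spec

section PerBlock
open Polynomial RealInnerProductSpace
variable {m s : ℕ}

lemma my_perblock (A : Matrix (Fin m) (Fin m) ℝ) (hA : A.IsHermitian)
    (W : Matrix (Fin m) (Fin s) ℝ) (Cm : Matrix (Fin s) (Fin s) ℝ)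
    (hAW : A * W = W * Cm) (hrank : W.rank = s) :
    ∃ (ν : Fin (m - s) → ℝ) (f : Fin (m - s) → Fin m → ℝ),
      (∀ r, A *ᵥ f r = ν r • f r) ∧
      (∀ r (x : Fin s → ℝ), (W *ᵥ x) ⬝ᵥ f r = 0) ∧
      (∀ y : Fin m → ℝ, ∃ u : Fin s ⊕ Fin (m - s) → ℝ, (Bcols W f) *ᵥ u = y) ∧
      (∀ (μ : ℝ) (v w : Fin m → ℝ) (x₀ : Fin s → ℝ), W *ᵥ x₀ = w →
        A *ᵥ v = μ • v → v ⬝ᵥ w ≠ 0 →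
        ∃ x : Fin s → ℝ, x ≠ 0 ∧ Cm *ᵥ x = μ • x) := by
  classical
  set E := EuclideanSpace ℝ (Fin m)
  let TW : EuclideanSpace ℝ (Fin s) →ₗ[ℝ] E := Matrix.toEuclideanLin W
  have hTW : ∀ x : Fin s → ℝ, TW (WithLp.toLp 2 x) = WithLp.toLp 2 (W *ᵥ x) := fun _ => rfl
  let K : Submodule ℝ E := LinearMap.range TW
  let T : E →ₗ[ℝ] E := Matrix.toEuclideanLin A
  have hT : ∀ x : Fin m → ℝ, T (WithLp.toLp 2 x) = WithLp.toLp 2 (A *ᵥ x) := fun _ => rfl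
  have hsym : T.IsSymmetric := (Matrix.isHermitian_iff_isSymmetric).mp hA
  have hks : Module.finrank ℝ K = s := by
    have := Matrix.rank_eq_finrank_range_toLin W (PiLp.basisFun 2 ℝ (Fin m))
      (PiLp.basisFun 2 ℝ (Fin s))
    rw [hrank] at this
    exact this.symm
  have hKinv : ∀ v ∈ K, T v ∈ K := by
    rintro v ⟨x, rfl⟩
    refine ⟨WithLp.toLp 2 (Cm *ᵥ WithLp.ofLp x), ?_⟩
    show WithLp.toLp 2 (W *ᵥ (Cm *ᵥ WithLp.ofLp x)) = WithLp.toLp 2 (A *ᵥ (W *ᵥ WithLp.ofLp x))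
    rw [mulVec_mulVec, mulVec_mulVec, hAW]
  have hocinv : ∀ v ∈ Kᗮ, T v ∈ Kᗮ := by
    intro v hv
    rw [Submodule.mem_orthogonal] at hv ⊢
    intro u hu
    rw [← hsym u v]
    exact hv (T u) (hKinv u hu)
  let T' := T.restrict hocinv
  have hsym' : T'.IsSymmetric := hsym.restrict_invariant hocinv
  have hdim : Module.finrank ℝ (Kᗮ) = m - s := by
    have h1 := Submodule.finrank_add_finrank_orthogonal K
    rw [hks] at h1
    have h2 : Module.finrank ℝ E = m := finrank_euclideanSpace_fin
    omega
  let b := hsym'.eigenvectorBasis hdim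
  let ν := hsym'.eigenvalues hdim
  have heig : ∀ r, T' (b r) = (ν r) • b r := fun r =>
    hsym'.apply_eigenvectorBasis hdim r
  refine ⟨ν, fun r => ((b r : E) : Fin m → ℝ), ?_, ?_, ?_, ?_⟩
  · intro r
    have := congrArg (Subtype.val) (heig r)
    have h2 : T ((b r : E)) = ν r • ((b r : E)) := this
    replace h2 := congrArg WithLp.ofLp h2
    exact h2
  · intro r x
    have hwx : (WithLp.toLp 2 (W *ᵥ x) : E) ∈ K := ⟨WithLp.toLp 2 x, rfl⟩
    have := (b r).2 _ hwx
    rw [my_inner_dot] at this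
    exact this
  · intro y
    obtain ⟨p, hp, q, hq, hpq⟩ := K.exists_add_mem_mem_orthogonal (WithLp.toLp 2 y : E)
    obtain ⟨x, hx⟩ := hp
    refine ⟨Sum.elim (WithLp.ofLp x) (fun r => (b.repr ⟨q, hq⟩) r), ?_⟩
    rw [Bcols_mulVec]
    have hq' : (∑ r, (b.repr ⟨q, hq⟩) r • ((b r : E) : Fin m → ℝ)) = WithLp.ofLp q := by
      have h2 : ((∑ i, b.repr ⟨q, hq⟩ i • b i : ↥Kᗮ) : E) = q :=
        congrArg Subtype.val (b.sum_repr ⟨q, hq⟩)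
      have h3 : ((∑ i, b.repr ⟨q, hq⟩ i • b i : ↥Kᗮ) : E)
          = ∑ r, (b.repr ⟨q, hq⟩) r • ((b r : E)) := by
        rw [AddSubmonoidClass.coe_finset_sum]
        simp
      calc _ = WithLp.ofLp (∑ r, (b.repr ⟨q, hq⟩) r • ((b r : E))) := by
            rw [WithLp.ofLp_sum]; rfl
        _ = _ := congrArg WithLp.ofLp (h3.symm.trans h2)
    have hcp : (Sum.elim (WithLp.ofLp x) (fun r => (b.repr ⟨q, hq⟩) r)) ∘ Sum.inl = WithLp.ofLp x := rfl
    rw [hcp]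
    have hsecond : (∑ k, (Sum.elim (WithLp.ofLp x) (fun r => (b.repr ⟨q, hq⟩) r)) (Sum.inr k) •
        ((b k : E) : Fin m → ℝ)) = WithLp.ofLp q := hq'
    rw [hsecond]
    have hx' : W *ᵥ WithLp.ofLp x = WithLp.ofLp p := congrArg WithLp.ofLp hx
    rw [hx']
    exact (congrArg WithLp.ofLp hpq).symm
  · intro μ v w x₀ hw hv hvw
    obtain ⟨p, hp, q, hq, hpq⟩ := K.exists_add_mem_mem_orthogonal (WithLp.toLp 2 v : E)
    have hTv : T (WithLp.toLp 2 v) = μ • (WithLp.toLp 2 v : E) := congrArg (WithLp.toLp 2) hv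
    have hdecomp : T p - μ • p = μ • q - T q := by
      have : T p + T q = μ • p + μ • q := by
        rw [← map_add, ← hpq, hTv, ← smul_add, ← hpq]
      linear_combination (norm := module) this
    have hzero : T p - μ • p = 0 := by
      have h1 : T p - μ • p ∈ K := Submodule.sub_mem K (hKinv p hp) (Submodule.smul_mem K μ hp)
      have h2 : T p - μ • p ∈ Kᗮ := by
        rw [hdecomp]
        exact Submodule.sub_mem _ (Submodule.smul_mem _ μ hq) (hocinv q hq)
      have := (Submodule.orthogonal_disjoint K).eq_bot ▸ Submodule.mem_inf.mpr ⟨h1, h2⟩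
      simpa [Submodule.mem_bot] using this
    have hTp : T p = μ • p := by linear_combination (norm := module) hzero
    obtain ⟨x, hx⟩ := hp
    have hqw : WithLp.ofLp q ⬝ᵥ w = 0 := by
      have hwK : (WithLp.toLp 2 w : E) ∈ K := ⟨WithLp.toLp 2 x₀, congrArg (WithLp.toLp 2) hw⟩
      have := hq _ hwK
      rw [my_inner_dot] at this
      rw [dotProduct_comm]
      exact this
    have hpw : WithLp.ofLp p ⬝ᵥ w ≠ 0 := by
      have : v ⬝ᵥ w = WithLp.ofLp p ⬝ᵥ w + WithLp.ofLp q ⬝ᵥ w := by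
        rw [← add_dotProduct]
        exact congrArg (fun (z : E) => WithLp.ofLp z ⬝ᵥ w) hpq
      rw [this, hqw, add_zero] at hvw
      exact hvw
    have hxne : WithLp.ofLp x ≠ 0 := by
      intro h0
      rw [WithLp.ofLp_eq_zero] at h0
      subst h0
      rw [map_zero] at hx
      apply hpw
      rw [← hx]
      simp
    have hCx : Cm *ᵥ WithLp.ofLp x = μ • WithLp.ofLp x := by
      have hinj : Function.Injective TW := by
        have h1 := LinearMap.finrank_range_add_finrank_ker TW
        have h2 : Module.finrank ℝ (EuclideanSpace ℝ (Fin s)) = s := finrank_euclideanSpace_fin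
        rw [hks, h2] at h1
        have : Module.finrank ℝ (LinearMap.ker TW) = 0 := by omega
        rw [← LinearMap.ker_eq_bot]
        exact Submodule.finrank_eq_zero.mp this
      suffices hh : TW (WithLp.toLp 2 (Cm *ᵥ WithLp.ofLp x)) = TW (WithLp.toLp 2 (μ • WithLp.ofLp x)) from
        congrArg WithLp.ofLp (hinj hh)
      rw [hTW, hTW]
      rw [mulVec_mulVec, ← hAW, ← mulVec_mulVec, mulVec_smul]
      have : W *ᵥ WithLp.ofLp x = WithLp.ofLp p := congrArg WithLp.ofLp hx
      rw [this]
      exact hTp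
    exact ⟨WithLp.ofLp x, hxne, hCx⟩


end PerBlock

section GraphAux
open Polynomial

lemma my_adj_hermitian {V : Type*} [Fintype V] (Γ : SimpleGraph V) [DecidableRel Γ.Adj] :
    (Γ.adjMatrix ℝ).IsHermitian := by
  show _ᴴ = _
  ext i j
  simp [Matrix.conjTranspose_apply, SimpleGraph.adjMatrix_apply, SimpleGraph.adj_comm]

lemma my_sum_sigma_eq {p : ℕ} {n : Fin p → ℕ} (j : Fin p) (F : ((i : Fin p) × Fin (n i)) → ℝ)
    (h0 : ∀ (l : Fin p) (b : Fin (n l)), l ≠ j → F ⟨l,b⟩ = 0) :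
    (∑ x : (i : Fin p) × Fin (n i), F x) = ∑ b : Fin (n j), F ⟨j, b⟩ := by
  rw [← Finset.univ_sigma_univ, Finset.sum_sigma]
  exact Finset.sum_eq_single j (fun l _ hl => Finset.sum_eq_zero fun b _ => h0 l b hl)
    (fun h => absurd (Finset.mem_univ j) h)

lemma my_hJoin_adj_same {p : ℕ} (H : SimpleGraph (Fin p)) [DecidableRel H.Adj]
    (n : Fin p → ℕ) (G : ∀ i, SimpleGraph (Fin (n i))) [∀ i, DecidableRel (G i).Adj]
    (i : Fin p) (a b : Fin (n i)) :
    (H.hJoin n G).adjMatrix ℝ ⟨i,a⟩ ⟨i,b⟩ = (G i).adjMatrix ℝ a b := by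
  rw [SimpleGraph.adjMatrix_apply]
  simp only [SimpleGraph.adjMatrix_apply, SimpleGraph.hJoin, dif_pos rfl]
  rfl

lemma my_hJoin_adj_ne {p : ℕ} (H : SimpleGraph (Fin p)) [DecidableRel H.Adj]
    (n : Fin p → ℕ) (G : ∀ i, SimpleGraph (Fin (n i))) [∀ i, DecidableRel (G i).Adj]
    {i j : Fin p} (hij : i ≠ j) (a : Fin (n i)) (b : Fin (n j)) :
    (H.hJoin n G).adjMatrix ℝ ⟨i,a⟩ ⟨j,b⟩ = if H.Adj i j then 1 else 0 := by
  rw [SimpleGraph.adjMatrix_apply]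
  simp only [SimpleGraph.adjMatrix_apply, SimpleGraph.hJoin, dif_neg hij]

end GraphAux
open Polynomial in
/-- The spectrum of the `H`-join `G` of arbitrary graphs `G_1, …, G_p` (as a
multiset: the roots of the characteristic polynomial of its adjacency matrix) is
the union over `i` of the spectrum of `G_i` with one copy of each main eigenvalue
removed (so each main eigenvalue keeps multiplicity `m(μ) - 1` and each non-main
eigenvalue keeps its full multiplicity), together with the `s = Σ sᵢ` eigenvalues
of the `H`-join associated matrix `W̃`. -/
theorem hJoin_spectrum {p : ℕ} (H : SimpleGraph (Fin p))
    [DecidableRel H.Adj] (n : Fin p → ℕ) (G : ∀ i, SimpleGraph (Fin (n i)))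
    [∀ i, DecidableRel (G i).Adj]
    -- `s i` is the number of distinct main eigenvalues of `G i`
    (s : Fin p → ℕ) (hs : ∀ i, s i = {μ : ℝ | ((G i).adjMatrix ℝ).IsMainEig μ}.ncard)
    -- `Wmat i` is the walk matrix of `G i`, of full column rank
    (Wmat : ∀ i, Matrix (Fin (n i)) (Fin (s i)) ℝ)
    (hWmat : ∀ i a k, Wmat i a k = (((G i).adjMatrix ℝ ^ (k : ℕ)) *ᵥ fun _ => (1 : ℝ)) a)
    (hrank : ∀ i, (Wmat i).rank = s i)
    -- `c i` lists the coefficients of the main characteristic polynomial of `G i`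
    (S : Fin p → Finset ℝ) (hS : ∀ i μ, μ ∈ S i ↔ ((G i).adjMatrix ℝ).IsMainEig μ)
    (c : ∀ i, Fin (s i) → ℝ)
    (hc : ∀ i, ∏ μ ∈ S i, (X - C μ) =
      X ^ (s i) - ∑ k : Fin (s i), C (c i k) * X ^ (k : ℕ))
    -- `Wt` is the `H`-join associated matrix `W̃`
    (Wt : Matrix ((i : Fin p) × Fin (s i)) ((i : Fin p) × Fin (s i)) ℝ)
    (hWt : ∀ x y, Wt x y =
      if x.1 = y.1 then
        -- companion matrix `C(m_{G_{x.1}})`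
        (if (y.2 : ℕ) = s x.1 - 1 then c x.1 x.2
         else if (x.2 : ℕ) = (y.2 : ℕ) + 1 then 1 else 0)
      else if H.Adj x.1 y.1 then
        -- `M_{x.1, y.1}`: first row `jᵀ W_{G_{y.1}}`, zeros elsewhere
        (if (x.2 : ℕ) = 0 then ∑ a, Wmat y.1 a y.2 else 0)
      else 0) :
    ((H.hJoin n G).adjMatrix ℝ).charpoly.roots =
      (∑ i : Fin p, (((G i).adjMatrix ℝ).charpoly.roots - (S i).val))
        + Wt.charpoly.roots := by
  classical
  have hAH : ((H.hJoin n G).adjMatrix ℝ).IsHermitian := my_adj_hermitian _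
  have hAiH : ∀ i, ((G i).adjMatrix ℝ).IsHermitian := fun i => my_adj_hermitian _
  have hscard : ∀ i, s i = (S i).card := by
    intro i
    rw [hs i]
    have h1 : {μ : ℝ | ((G i).adjMatrix ℝ).IsMainEig μ} = ↑(S i) := by
      ext μ
      simp only [Set.mem_setOf_eq, Finset.mem_coe]
      exact (hS i μ).symm
    rw [h1, Set.ncard_coe_finset]
  have hsle : ∀ i, s i ≤ n i := by
    intro i
    have h1 := (Wmat i).rank_le_card_height
    rw [hrank i, Fintype.card_fin] at h1
    exact h1
  have hW1 : ∀ i (h0 : 0 < s i) (a : Fin (n i)), Wmat i a ⟨0, h0⟩ = 1 := by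
    intro i h0 a
    rw [hWmat]
    simp
  have hspos : ∀ i, 0 < n i → 0 < s i := by
    intro i hni
    obtain ⟨μ, hμ⟩ := my_exists_main hni ((G i).adjMatrix ℝ) (hAiH i)
    rw [hscard i]
    exact Finset.card_pos.mpr ⟨μ, (hS i μ).mpr hμ⟩
  -- the companion blocks of Wt
  set Cm : ∀ i, Matrix (Fin (s i)) (Fin (s i)) ℝ :=
    fun i => Matrix.of fun x y => Wt ⟨i,x⟩ ⟨i,y⟩ with hCmdef
  have hCm : ∀ i (x y : Fin (s i)), Cm i x y =
      (if (y:ℕ) = s i - 1 then c i x else if (x:ℕ) = (y:ℕ)+1 then 1 else 0) := by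
    intro i x y
    show Wt ⟨i,x⟩ ⟨i,y⟩ = _
    rw [hWt]
    simp
  -- the walk annihilation identity
  have hann : ∀ i, ((G i).adjMatrix ℝ ^ (s i)) *ᵥ (fun _ => (1:ℝ))
      = ∑ x : Fin (s i), c i x • (((G i).adjMatrix ℝ ^ (x:ℕ)) *ᵥ (fun _ => (1:ℝ))) := by
    intro i
    have h1 := my_annihilate ((G i).adjMatrix ℝ) (hAiH i) (S i) (fun μ h => (hS i μ).mpr h)
    rw [hc i, map_sub, map_pow, aeval_X, map_sum] at h1
    simp only [_root_.map_mul, aeval_C, map_pow, aeval_X] at h1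
    rw [sub_mulVec, my_sum_mulVec] at h1
    have h2 : ∀ x : Fin (s i),
        ((algebraMap ℝ (Matrix (Fin (n i)) (Fin (n i)) ℝ)) (c i x) * (G i).adjMatrix ℝ ^ (x:ℕ))
          *ᵥ (fun _ => (1:ℝ))
        = c i x • (((G i).adjMatrix ℝ ^ (x:ℕ)) *ᵥ fun _ => (1:ℝ)) := by
      intro x
      rw [Algebra.algebraMap_eq_smul_one, smul_mul_assoc, one_mul, smul_mulVec]
    rw [Finset.sum_congr rfl (fun x _ => h2 x)] at h1
    exact sub_eq_zero.mp h1
  -- the per-block intertwining identity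
  have hAiW : ∀ i, (G i).adjMatrix ℝ * Wmat i = Wmat i * Cm i := by
    intro i
    ext a k
    have hL : ((G i).adjMatrix ℝ * Wmat i) a k
        = (((G i).adjMatrix ℝ ^ ((k:ℕ)+1)) *ᵥ (fun _ => (1:ℝ))) a := by
      rw [mul_apply]
      have hcol : ∀ b, Wmat i b k = (((G i).adjMatrix ℝ ^ (k:ℕ)) *ᵥ fun _ => (1:ℝ)) b :=
        fun b => hWmat i b k
      simp_rw [hcol]
      rw [pow_succ', ← mulVec_mulVec]
      rfl
    rw [hL, mul_apply]
    by_cases hk : (k:ℕ) = s i - 1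
    · have hk1 : (k:ℕ)+1 = s i := by have := k.2; omega
      rw [hk1, hann i]
      simp only [Finset.sum_apply, Pi.smul_apply, smul_eq_mul]
      refine Finset.sum_congr rfl fun x _ => ?_
      rw [hCm i x k, if_pos hk, ← hWmat i a x]
      ring
    · have hk1 : (k:ℕ)+1 < s i := by have := k.2; omega
      have hcm : ∀ x : Fin (s i), Cm i x k
          = if x = (⟨(k:ℕ)+1, hk1⟩ : Fin (s i)) then 1 else 0 := by
        intro x
        rw [hCm i x k, if_neg hk]
        refine if_congr ?_ rfl rfl
        rw [Fin.ext_iff]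
      simp_rw [hcm, mul_ite, mul_one, mul_zero, Finset.sum_ite_eq' Finset.univ,
        Finset.mem_univ, if_true]
      exact (hWmat i a ⟨(k:ℕ)+1, hk1⟩).symm
  -- per-block spectral data
  choose ν f hPB using fun i => my_perblock ((G i).adjMatrix ℝ) (hAiH i) (Wmat i) (Cm i)
    (hAiW i) (hrank i)
  have heig := fun i => (hPB i).1
  have horth := fun i => (hPB i).2.1
  have hsurj := fun i => (hPB i).2.2.1
  have hmain := fun i => (hPB i).2.2.2
  have hnn : ∀ i, s i + (n i - s i) = n i := fun i => Nat.add_sub_cancel' (hsle i)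
  let e : ∀ i, Fin (n i) ≃ Fin (s i) ⊕ Fin (n i - s i) :=
    fun i => (finCongr (hnn i).symm).trans finSumFinEquiv.symm
  have hdeti : ∀ i, IsUnit ((Bcols (Wmat i) (f i)).submatrix id (e i)).det := by
    intro i
    rw [← Matrix.isUnit_iff_isUnit_det, ← Matrix.mulVec_surjective_iff_isUnit]
    intro y
    obtain ⟨u, hu⟩ := hsurj i y
    refine ⟨u ∘ (e i), ?_⟩
    ext a
    show ∑ bb, (Bcols (Wmat i) (f i)) a ((e i) bb) * u ((e i) bb) = y a
    rw [Fintype.sum_equiv (e i) (fun bb => Bcols (Wmat i) (f i) a ((e i) bb) * u ((e i) bb))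
      (fun d => Bcols (Wmat i) (f i) a d * u d) (fun bb => rfl)]
    exact congrFun hu a
  have hchari : ∀ i, ((G i).adjMatrix ℝ).charpoly
      = (Cm i).charpoly * ∏ r, (X - C (ν i r)) :=
    fun i => my_key_factor ((G i).adjMatrix ℝ) (Wmat i) (Cm i) (f i) (ν i) (e i)
      (hAiW i) (heig i) (hdeti i)
  have hrootsCm : ∀ i, (Cm i).charpoly.roots = (S i).val := by
    intro i
    refine my_roots_eq (Cm i) (S i) (hscard i).symm ?_
    intro μ hμ
    obtain ⟨v, hv, hvone⟩ := (hS i μ).mp hμ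
    have h0 : 0 < s i := by rw [hscard i]; exact Finset.card_pos.mpr ⟨μ, hμ⟩
    refine hmain i μ v (fun _ => 1) (Pi.single ⟨0,h0⟩ 1) ?_ hv hvone
    ext a
    simp only [mulVec_single, mul_one, MulOpposite.op_one, one_smul, col_apply]
    exact hW1 i h0 a
  have hprodne : ∀ i, (∏ r, (X - C (ν i r)) : ℝ[X]) ≠ 0 := fun i =>
    (monic_prod_of_monic _ _ (fun r _ => monic_X_sub_C (ν i r))).ne_zero
  have hrootsAi : ∀ i, ((G i).adjMatrix ℝ).charpoly.roots
      = (S i).val + (Finset.univ.val.map (ν i)) := by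
    intro i
    rw [hchari i, Polynomial.roots_mul (mul_ne_zero (Cm i).charpoly_monic.ne_zero (hprodne i)),
      hrootsCm i]
    congr 1
    have hne0 : (∏ r ∈ Finset.univ, (X - C (ν i r)) : ℝ[X]) ≠ 0 := hprodne i
    rw [Polynomial.roots_prod _ _ hne0]
    simp only [Polynomial.roots_X_sub_C]
    rw [Multiset.bind_singleton]
  -- global objects
  set Wglob : Matrix ((i : Fin p) × Fin (n i)) ((i : Fin p) × Fin (s i)) ℝ :=
    Matrix.blockDiagonal' Wmat with hWglob
  set fglob : ((i : Fin p) × Fin (n i - s i)) → ((i : Fin p) × Fin (n i)) → ℝ :=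
    fun r x => if h : x.1 = r.1 then f r.1 r.2 (Fin.cast (congrArg n h) x.2) else 0 with hfg
  set νglob : ((i : Fin p) × Fin (n i - s i)) → ℝ := fun r => ν r.1 r.2 with hng
  have hfgsame : ∀ j t (a : Fin (n j)), fglob ⟨j,t⟩ ⟨j,a⟩ = f j t a := by
    intro j t a
    show (if h : j = j then f j t (Fin.cast (congrArg n h) a) else 0) = f j t a
    rw [dif_pos rfl]
    rfl
  have hfgne : ∀ j t l (b : Fin (n l)), l ≠ j → fglob ⟨j,t⟩ ⟨l,b⟩ = 0 := by
    intro j t l b h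
    show (if h : l = j then f j t (Fin.cast (congrArg n h) b) else 0) = 0
    rw [dif_neg h]
  have hGlobAW : (H.hJoin n G).adjMatrix ℝ * Wglob = Wglob * Wt := by
    ext x y
    obtain ⟨i,a⟩ := x
    obtain ⟨j,k⟩ := y
    rw [mul_apply, mul_apply]
    by_cases hij : i = j
    · subst hij
      have hL : (∑ z : (l : Fin p) × Fin (n l),
          (H.hJoin n G).adjMatrix ℝ ⟨i,a⟩ z * Wglob z ⟨i,k⟩)
          = ∑ b : Fin (n i), (G i).adjMatrix ℝ a b * Wmat i b k := by
        rw [my_sum_sigma_eq i _ (fun l b hl => by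
          rw [hWglob, blockDiagonal'_apply_ne _ _ _ hl, mul_zero])]
        refine Finset.sum_congr rfl fun b _ => ?_
        rw [my_hJoin_adj_same, hWglob, blockDiagonal'_apply_eq]
      have hR : (∑ z : (l : Fin p) × Fin (s l), Wglob ⟨i,a⟩ z * Wt z ⟨i,k⟩)
          = ∑ x : Fin (s i), Wmat i a x * Cm i x k := by
        rw [my_sum_sigma_eq i _ (fun l b hl => by
          rw [hWglob, blockDiagonal'_apply_ne _ _ _ (Ne.symm hl), zero_mul])]
        refine Finset.sum_congr rfl fun x _ => ?_
        rw [hWglob, blockDiagonal'_apply_eq]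
        rfl
      rw [hL, hR, ← mul_apply, ← mul_apply, hAiW i]
    · have h0i : 0 < s i := hspos i (by have := a.2; omega)
      have hL : (∑ z : (l : Fin p) × Fin (n l),
          (H.hJoin n G).adjMatrix ℝ ⟨i,a⟩ z * Wglob z ⟨j,k⟩)
          = if H.Adj i j then ∑ b : Fin (n j), Wmat j b k else 0 := by
        rw [my_sum_sigma_eq j _ (fun l b hl => by
          rw [hWglob, blockDiagonal'_apply_ne _ _ _ hl, mul_zero])]
        by_cases hadj : H.Adj i j
        · rw [if_pos hadj]
          refine Finset.sum_congr rfl fun b _ => ?_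
          rw [my_hJoin_adj_ne H n G hij, if_pos hadj, hWglob, blockDiagonal'_apply_eq, one_mul]
        · rw [if_neg hadj]
          refine Finset.sum_eq_zero fun b _ => ?_
          rw [my_hJoin_adj_ne H n G hij, if_neg hadj, zero_mul]
      have hR : (∑ z : (l : Fin p) × Fin (s l), Wglob ⟨i,a⟩ z * Wt z ⟨j,k⟩)
          = if H.Adj i j then ∑ b : Fin (n j), Wmat j b k else 0 := by
        rw [my_sum_sigma_eq i _ (fun l b hl => by
          rw [hWglob, blockDiagonal'_apply_ne _ _ _ (Ne.symm hl), zero_mul])]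
        have hWtv : ∀ x : Fin (s i), Wt ⟨i,x⟩ ⟨j,k⟩
            = if H.Adj i j then (if (x:ℕ) = 0 then ∑ b, Wmat j b k else 0) else 0 := by
          intro x
          rw [hWt ⟨i,x⟩ ⟨j,k⟩]
          exact if_neg hij
        have hblk : ∀ x : Fin (s i), Wglob ⟨i,a⟩ ⟨i,x⟩ = Wmat i a x := fun x => by
          rw [hWglob, blockDiagonal'_apply_eq]
        by_cases hadj : H.Adj i j
        · rw [if_pos hadj]
          have hterm : ∀ x : Fin (s i), Wglob ⟨i,a⟩ ⟨i,x⟩ * Wt ⟨i,x⟩ ⟨j,k⟩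
              = if x = (⟨0,h0i⟩ : Fin (s i)) then Wmat i a x * ∑ b, Wmat j b k else 0 := by
            intro x
            rw [hblk x, hWtv x, if_pos hadj]
            by_cases hx : (x:ℕ) = 0
            · rw [if_pos hx, if_pos (Fin.ext hx)]
            · rw [if_neg hx, if_neg (fun hh => hx (by rw [hh])), mul_zero]
          rw [Finset.sum_congr rfl (fun x _ => hterm x)]
          rw [Finset.sum_ite_eq' Finset.univ, if_pos (Finset.mem_univ _), hW1 i h0i a, one_mul]
        · rw [if_neg hadj]
          refine Finset.sum_eq_zero fun x _ => ?_
          rw [hWtv x, if_neg hadj, mul_zero]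
      rw [hL, hR]
  have hGlobEig : ∀ r, (H.hJoin n G).adjMatrix ℝ *ᵥ fglob r = νglob r • fglob r := by
    intro r
    obtain ⟨j,t⟩ := r
    have h0j : 0 < s j := hspos j (by have := t.2; omega)
    ext x
    obtain ⟨i,a⟩ := x
    show (∑ z : (l : Fin p) × Fin (n l),
        (H.hJoin n G).adjMatrix ℝ ⟨i,a⟩ z * fglob ⟨j,t⟩ z)
      = νglob ⟨j,t⟩ * fglob ⟨j,t⟩ ⟨i,a⟩
    rw [my_sum_sigma_eq j _ (fun l b hl => by rw [hfgne j t l b hl, mul_zero])]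
    by_cases hij : i = j
    · subst hij
      have hL : (∑ b : Fin (n i), (H.hJoin n G).adjMatrix ℝ ⟨i,a⟩ ⟨i,b⟩ * fglob ⟨i,t⟩ ⟨i,b⟩)
          = ∑ b, (G i).adjMatrix ℝ a b * f i t b := by
        refine Finset.sum_congr rfl fun b _ => ?_
        rw [my_hJoin_adj_same, hfgsame]
      rw [hL, hfgsame]
      exact congrFun (heig i t) a
    · have hL : (∑ b : Fin (n j), (H.hJoin n G).adjMatrix ℝ ⟨i,a⟩ ⟨j,b⟩ * fglob ⟨j,t⟩ ⟨j,b⟩)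
          = (if H.Adj i j then 1 else 0) * ∑ b, f j t b := by
        rw [Finset.mul_sum]
        refine Finset.sum_congr rfl fun b _ => ?_
        rw [my_hJoin_adj_ne H n G hij, hfgsame]
      rw [hL, hfgne j t i a hij, mul_zero]
      have hsum0 : (∑ b, f j t b) = 0 := by
        have h1 := horth j t (Pi.single ⟨0,h0j⟩ 1)
        have h2 : (Wmat j *ᵥ Pi.single (⟨0,h0j⟩ : Fin (s j)) 1) = fun _ => (1:ℝ) := by
          ext b
          simp only [mulVec_single, mul_one, MulOpposite.op_one, one_smul, col_apply]
          exact hW1 j h0j b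
        rw [h2] at h1
        simpa [dotProduct] using h1
      rw [hsum0, mul_zero]
  let Eg : ((i : Fin p) × Fin (n i)) ≃ ((i : Fin p) × Fin (s i)) ⊕ ((i : Fin p) × Fin (n i - s i)) :=
    (Equiv.sigmaCongrRight e).trans (Equiv.sigmaSumDistrib _ _)
  have hdetg : IsUnit ((Bcols Wglob fglob).submatrix id Eg).det := by
    rw [← Matrix.isUnit_iff_isUnit_det, ← Matrix.mulVec_surjective_iff_isUnit]
    intro y
    choose uu huu using fun i => hsurj i (fun a => y ⟨i,a⟩)
    refine ⟨(Sum.elim (fun z : (i : Fin p) × Fin (s i) => uu z.1 (Sum.inl z.2))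
      (fun r : (i : Fin p) × Fin (n i - s i) => uu r.1 (Sum.inr r.2))) ∘ Eg, ?_⟩
    set u := Sum.elim (fun z : (i : Fin p) × Fin (s i) => uu z.1 (Sum.inl z.2))
      (fun r : (i : Fin p) × Fin (n i - s i) => uu r.1 (Sum.inr r.2)) with hu
    ext x
    obtain ⟨i,a⟩ := x
    show (∑ bb, (Bcols Wglob fglob) ⟨i,a⟩ (Eg bb) * u (Eg bb)) = y ⟨i,a⟩
    rw [Fintype.sum_equiv Eg (fun bb => Bcols Wglob fglob ⟨i,a⟩ (Eg bb) * u (Eg bb))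
      (fun d => Bcols Wglob fglob ⟨i,a⟩ d * u d) (fun bb => rfl)]
    rw [Fintype.sum_sum_type]
    have hK : (∑ z : (l : Fin p) × Fin (s l),
        Bcols Wglob fglob ⟨i,a⟩ (Sum.inl z) * u (Sum.inl z))
        = ∑ xx : Fin (s i), Wmat i a xx * uu i (Sum.inl xx) := by
      rw [my_sum_sigma_eq i _ (fun l b hl => by
        show Wglob ⟨i,a⟩ ⟨l,b⟩ * u (Sum.inl ⟨l,b⟩) = 0
        rw [hWglob, blockDiagonal'_apply_ne _ _ _ (Ne.symm hl), zero_mul])]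
      refine Finset.sum_congr rfl fun xx _ => ?_
      show Wglob ⟨i,a⟩ ⟨i,xx⟩ * uu i (Sum.inl xx) = _
      rw [hWglob, blockDiagonal'_apply_eq]
    have hR : (∑ r : (l : Fin p) × Fin (n l - s l),
        Bcols Wglob fglob ⟨i,a⟩ (Sum.inr r) * u (Sum.inr r))
        = ∑ t : Fin (n i - s i), f i t a * uu i (Sum.inr t) := by
      rw [my_sum_sigma_eq i _ (fun l b hl => by
        show fglob ⟨l,b⟩ ⟨i,a⟩ * u (Sum.inr ⟨l,b⟩) = 0
        rw [hfgne l b i a (Ne.symm hl), zero_mul])]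
      refine Finset.sum_congr rfl fun t _ => ?_
      show fglob ⟨i,t⟩ ⟨i,a⟩ * uu i (Sum.inr t) = _
      rw [hfgsame]
    rw [hK, hR]
    have hfin := congrFun (huu i) a
    rw [← hfin]
    show _ = ∑ d, Bcols (Wmat i) (f i) a d * uu i d
    rw [Fintype.sum_sum_type]
    rfl
  have hglobchar : ((H.hJoin n G).adjMatrix ℝ).charpoly
      = Wt.charpoly * ∏ r, (X - C (νglob r)) :=
    my_key_factor _ Wglob Wt fglob νglob Eg hGlobAW hGlobEig hdetg
  rw [hglobchar]
  have hprodg : (∏ r ∈ Finset.univ, (X - C (νglob r)) : ℝ[X]) ≠ 0 :=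
    (monic_prod_of_monic _ _ (fun r _ => monic_X_sub_C (νglob r))).ne_zero
  rw [Polynomial.roots_mul (mul_ne_zero Wt.charpoly_monic.ne_zero hprodg),
    Polynomial.roots_prod _ _ hprodg]
  simp only [Polynomial.roots_X_sub_C]
  rw [Multiset.bind_singleton]
  have hsum_i : ∀ i : Fin p, (((G i).adjMatrix ℝ).charpoly.roots - (S i).val)
      = Finset.univ.val.map (ν i) := by
    intro i
    rw [hrootsAi i, add_tsub_cancel_left]
  rw [Finset.sum_congr rfl (fun i _ => hsum_i i), add_comm]
  congr 1
  -- map νglob univ.val = Σ i, univ.val.map (ν i)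
  have huniv : (Finset.univ : Finset ((i : Fin p) × Fin (n i - s i)))
      = Finset.univ.sigma (fun _ => Finset.univ) := (Finset.univ_sigma_univ).symm
  rw [huniv]
  show Multiset.map νglob (Multiset.bind Finset.univ.val
    (fun i => Multiset.map (Sigma.mk i) Finset.univ.val)) = _
  rw [Multiset.map_bind]
  simp only [Multiset.map_map]
  rw [Finset.sum_eq_multiset_sum]
  show _ = (Multiset.map (fun i => Multiset.map (ν i) Finset.univ.val) Finset.univ.val).sum
  rw [Multiset.bind]
  congr 1
end
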